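/- Let σ ∈ (1/2, 1) and define 𝒲_σ(x) = ∫_{-∞}^{∞} R(e^y) R(e^{x−y}) e^{x + (2σ−1)y} dy for x ∈ ℝ, where R(y) = 2∑_{n=1}^∞ e^{-π n² y²}. Then for all x ≥ 0, 𝒲_σ(x) < 2𝒞², where 𝒞 = sup_{y>0} (y³+y) R(y). -/

import Mathlib

open Real Set MeasureTheory Filter Topology

set_option maxHeartbeats 1000000

noncomputable def Rf (y : ℝ) : ℝ := 2 * ∑' n : ℕ, Real.exp (-π * (n + 1) ^ 2 * y ^ 2)

noncomputable def Wf (σ x : ℝ) : ℝ :=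
  ∫ y : ℝ, Rf (Real.exp y) * Rf (Real.exp (x - y)) * Real.exp (x + (2 * σ - 1) * y)

noncomputable def calC : ℝ := sSup {x : ℝ | ∃ y : ℝ, 0 < y ∧ x = (y ^ 3 + y) * Rf y}

lemma Rf_nonneg (y : ℝ) : 0 ≤ Rf y := by
  have : 0 ≤ ∑' n : ℕ, Real.exp (-π * (n + 1) ^ 2 * y ^ 2) :=
    tsum_nonneg fun n => (Real.exp_pos _).le
  unfold Rf; linarith

lemma summable_Rf {y : ℝ} (hy : 0 < y) :
    Summable (fun n : ℕ => Real.exp (-π * (n + 1) ^ 2 * y ^ 2)) := by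
  have hr0 : (0:ℝ) < Real.exp (-(π * y ^ 2)) := Real.exp_pos _
  have hr1 : Real.exp (-(π * y ^ 2)) < 1 := by
    rw [Real.exp_lt_one_iff]
    have : 0 < π * y ^ 2 := by positivity
    linarith
  have hgeo : Summable (fun n : ℕ => Real.exp (-(π * y ^ 2)) ^ (n + 1)) := by
    exact ((summable_geometric_of_lt_one hr0.le hr1).mul_left (Real.exp (-(π * y ^ 2)))).congr
      (fun n => by rw [mul_comm]; exact (pow_succ _ _).symm)
  refine Summable.of_nonneg_of_le (fun n => (Real.exp_pos _).le) (fun n => ?_) hgeo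
  rw [← Real.exp_nat_mul]
  apply Real.exp_le_exp.2
  have h1 : (0:ℝ) ≤ (n:ℝ) := Nat.cast_nonneg n
  have hpy : 0 < π * y ^ 2 := by positivity
  push_cast
  nlinarith [sq_nonneg ((n:ℝ))]

lemma tsum_le_inv {y : ℝ} (hy : 0 < y) :
    ∑' n : ℕ, Real.exp (-π * (n + 1) ^ 2 * y ^ 2) ≤ 1 / (2 * y) := by
  have hc : 0 < π * y ^ 2 := by positivity
  set c := π * y ^ 2 with hcdef
  have hint : IntegrableOn (fun t : ℝ => Real.exp (-c * t ^ 2)) (Ioi 0) :=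
    (integrable_exp_neg_mul_sq hc).integrableOn
  have hIoi : ∫ t in Ioi (0:ℝ), Real.exp (-c * t ^ 2) = 1 / (2 * y) := by
    rw [integral_gaussian_Ioi c]
    rw [hcdef]
    rw [show π / (π * y ^ 2) = (1/y)^2 by field_simp [pi_ne_zero]]
    rw [Real.sqrt_sq (by positivity)]
    rw [div_div]
    congr 1
    ring
  refine Summable.tsum_le_of_sum_range_le (summable_Rf hy) (fun n => ?_)
  calc (∑ i ∈ Finset.range n, Real.exp (-π * (i + 1) ^ 2 * y ^ 2))
      = ∑ i ∈ Finset.range n, (fun t : ℝ => Real.exp (-c * t ^ 2)) ((0:ℝ) + (i + 1 : ℕ)) := by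
        apply Finset.sum_congr rfl
        intro i _
        simp only [zero_add]
        push_cast
        rw [hcdef]
        ring_nf
    _ ≤ ∫ t in (0:ℝ)..((0:ℝ) + (n:ℕ)), Real.exp (-c * t ^ 2) := by
        refine AntitoneOn.sum_le_integral (f := fun t : ℝ => Real.exp (-c * t ^ 2))
          (x₀ := 0) (a := n) ?_
        intro s hs t ht hst
        apply Real.exp_le_exp.2
        have hs0 : 0 ≤ s := hs.1
        have h2 : s^2 ≤ t^2 := by nlinarith
        nlinarith [mul_le_mul_of_nonneg_left h2 hc.le]
    _ ≤ ∫ t in Ioi (0:ℝ), Real.exp (-c * t ^ 2) := by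
        rw [zero_add, intervalIntegral.integral_of_le (by positivity)]
        apply setIntegral_mono_set hint
        · filter_upwards with t using (Real.exp_pos _).le
        · exact (Ioc_subset_Ioi_self).eventuallyLE
    _ = 1 / (2 * y) := hIoi

lemma Rf_le_inv {y : ℝ} (hy : 0 < y) : Rf y ≤ 1 / y := by
  have := tsum_le_inv hy
  unfold Rf
  rw [show (1:ℝ)/y = 2 * (1/(2*y)) by field_simp]
  linarith

lemma Rf_pos {y : ℝ} (hy : 0 < y) : 0 < Rf y := by
  unfold Rf
  have : 0 < ∑' n : ℕ, Real.exp (-π * (n + 1) ^ 2 * y ^ 2) := by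
    exact Summable.tsum_pos (summable_Rf hy) (fun n => (Real.exp_pos _).le) 0 (Real.exp_pos _)
  linarith

lemma term_le {y : ℝ} (hy : 0 < y) (n : ℕ) :
    Real.exp (-π * (n + 1) ^ 2 * y ^ 2) ≤ Real.exp (-(π * y ^ 2)) ^ (n + 1) := by
  rw [← Real.exp_nat_mul]
  apply Real.exp_le_exp.2
  have h1 : (0:ℝ) ≤ (n:ℝ) := Nat.cast_nonneg n
  have hpy : 0 < π * y ^ 2 := by positivity
  push_cast
  nlinarith [sq_nonneg ((n:ℝ))]

lemma Rf_le_exp {y : ℝ} (hy : 1 ≤ y) : Rf y ≤ 4 * Real.exp (-(π * y ^ 2)) := by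
  have hy0 : 0 < y := lt_of_lt_of_le one_pos hy
  set r := Real.exp (-(π * y ^ 2)) with hr
  have hr0 : 0 < r := Real.exp_pos _
  have hr1 : r < 1 := by
    rw [hr, Real.exp_lt_one_iff]
    have : 0 < π * y ^ 2 := by positivity
    linarith
  have hrhalf : r ≤ 1 / 2 := by
    have h1 : (1:ℝ) ≤ π * y ^ 2 := by nlinarith [Real.pi_gt_three]
    have h2 : r ≤ Real.exp (-1) := by
      rw [hr]; apply Real.exp_le_exp.2; linarith
    have h3 : Real.exp (-1) ≤ 1/2 := by
      rw [Real.exp_neg]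
      rw [div_eq_inv_mul, mul_one]
      apply inv_anti₀ two_pos
      linarith [Real.add_one_le_exp 1]
    linarith
  have hgeo : Summable (fun n : ℕ => r ^ (n + 1)) :=
    ((summable_geometric_of_lt_one hr0.le hr1).mul_left r).congr
      (fun n => by rw [mul_comm]; exact (pow_succ _ _).symm)
  have hts : ∑' n : ℕ, Real.exp (-π * (n + 1) ^ 2 * y ^ 2) ≤ ∑' n : ℕ, r ^ (n + 1) :=
    Summable.tsum_le_tsum (term_le hy0) (summable_Rf hy0) hgeo
  have hgeoval : ∑' n : ℕ, r ^ (n + 1) = r * (1 - r)⁻¹ := by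
    rw [show (fun n : ℕ => r ^ (n+1)) = (fun n : ℕ => r * r ^ n) from
      funext fun n => by rw [pow_succ, mul_comm], tsum_mul_left,
      tsum_geometric_of_lt_one hr0.le hr1]
  have hinv : (1 - r)⁻¹ ≤ 2 := by
    rw [inv_le_comm₀ (by linarith) two_pos]
    linarith
  have : ∑' n : ℕ, r ^ (n + 1) ≤ 2 * r := by
    rw [hgeoval]
    calc r * (1-r)⁻¹ ≤ r * 2 := mul_le_mul_of_nonneg_left hinv hr0.le
      _ = 2 * r := mul_comm _ _
  unfold Rf
  linarith

lemma poly_le_eight {y : ℝ} (hy : 0 < y) : (y ^ 3 + y) * Rf y ≤ 8 := by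
  rcases le_or_gt y 1 with h1 | h1
  · have hR : Rf y ≤ 1 / y := Rf_le_inv hy
    have hp : 0 ≤ y ^ 3 + y := by positivity
    calc (y^3+y) * Rf y ≤ (y^3+y) * (1/y) := mul_le_mul_of_nonneg_left hR hp
      _ = y^2 + 1 := by field_simp
      _ ≤ 8 := by nlinarith
  · have hR : Rf y ≤ 4 * Real.exp (-(π * y ^ 2)) := Rf_le_exp h1.le
    have hp : 0 ≤ y ^ 3 + y := by positivity
    have hexp : y ^ 3 + y ≤ Real.exp (π * y ^ 2) := by
      have h2 : (3:ℝ) * y ≤ π * y ^ 2 := by nlinarith [Real.pi_gt_three]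
      have h3 : Real.exp (3 * y) ≤ Real.exp (π * y ^ 2) := Real.exp_le_exp.2 h2
      have h4 : (y + 1) ^ 3 ≤ Real.exp (3 * y) := by
        have := Real.add_one_le_exp y
        calc (y+1)^3 ≤ (Real.exp y)^3 := by
              apply pow_le_pow_left₀ (by linarith) this
          _ = Real.exp (3 * y) := by
              rw [← Real.exp_nat_mul]; norm_num
      nlinarith
    have key : (y ^ 3 + y) * Real.exp (-(π * y ^ 2)) ≤ 1 := by
      rw [Real.exp_neg]
      rw [mul_inv_le_iff₀ (Real.exp_pos _)]
      linarith
    calc (y^3+y) * Rf y ≤ (y^3+y) * (4 * Real.exp (-(π * y^2))) :=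
          mul_le_mul_of_nonneg_left hR hp
      _ = 4 * ((y^3+y) * Real.exp (-(π * y^2))) := by ring
      _ ≤ 4 * 1 := by linarith [key]
      _ ≤ 8 := by norm_num

lemma bddAbove_S : BddAbove {x : ℝ | ∃ y : ℝ, 0 < y ∧ x = (y ^ 3 + y) * Rf y} := by
  refine ⟨8, fun z hz => ?_⟩
  obtain ⟨y, hy, rfl⟩ := hz
  exact poly_le_eight hy

lemma le_calC {y : ℝ} (hy : 0 < y) : (y ^ 3 + y) * Rf y ≤ calC :=
  le_csSup bddAbove_S ⟨y, hy, rfl⟩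

lemma calC_pos : 0 < calC := by
  have h1 : (1:ℝ)^3 + 1 = 2 := by norm_num
  have := le_calC one_pos
  rw [h1] at this
  have := Rf_pos one_pos
  linarith

lemma Rf_le_calC_div {u : ℝ} (hu : 0 < u) : Rf u ≤ calC / (u ^ 3 + u) := by
  rw [le_div_iff₀ (by positivity)]
  have := le_calC hu
  linarith [le_calC hu, mul_comm (Rf u) (u^3+u)]

noncomputable def Ff (y : ℝ) : ℝ := (Real.exp y + 1) / (Real.exp y + Real.exp (-y)) ^ 2

noncomputable def phi (t : ℝ) : ℝ := Real.arctan t / 2 - (t + 1) / (2 * (t ^ 2 + 1))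

lemma hasDerivAt_phi (t : ℝ) : HasDerivAt phi ((t^2 + t) / (t^2+1)^2) t := by
  have h1 : HasDerivAt (fun t : ℝ => Real.arctan t / 2) (1 / (1 + t ^ 2) / 2) t :=
    (Real.hasDerivAt_arctan t).div_const 2
  have hden : (2 * (t ^ 2 + 1)) ≠ 0 := by positivity
  have hnum : HasDerivAt (fun t : ℝ => t + 1) 1 t := (hasDerivAt_id t).add_const 1
  have hden' : HasDerivAt (fun t : ℝ => 2 * (t ^ 2 + 1)) (2 * (2 * t)) t := by
    have : HasDerivAt (fun t : ℝ => t ^ 2 + 1) (2 * t) t := by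
      simpa using ((hasDerivAt_pow 2 t).add_const 1)
    exact this.const_mul 2
  have h2 := hnum.div hden' hden
  have h := h1.sub h2
  refine HasDerivAt.congr_deriv (f := phi) h ?_
  have hpos : (0:ℝ) < t ^ 2 + 1 := by positivity
  field_simp
  ring

lemma Ff_eq (y : ℝ) : Ff y = ((Real.exp y)^2 + Real.exp y) / ((Real.exp y)^2 + 1)^2 * Real.exp y := by
  unfold Ff
  have hE : 0 < Real.exp y := Real.exp_pos y
  rw [Real.exp_neg]
  field_simp

lemma hasDerivAt_G (y : ℝ) : HasDerivAt (fun y => phi (Real.exp y)) (Ff y) y := by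
  have h := (hasDerivAt_phi (Real.exp y)).comp y (Real.hasDerivAt_exp y)
  rw [Ff_eq]
  exact h

lemma tendsto_G_atBot : Tendsto (fun y => phi (Real.exp y)) atBot (𝓝 (-(1/2))) := by
  have hphi : ContinuousAt phi 0 := by
    apply ContinuousAt.sub
    · exact (Real.continuous_arctan.continuousAt).div_const 2
    · apply ContinuousAt.div
      · fun_prop
      · fun_prop
      · norm_num
  have h0 : phi 0 = -(1/2) := by simp [phi, Real.arctan_zero]
  have := hphi.tendsto.comp Real.tendsto_exp_atBot
  rw [h0] at this
  exact this

lemma tendsto_phi_atTop : Tendsto phi atTop (𝓝 (π/4)) := by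
  have h1 : Tendsto (fun t : ℝ => Real.arctan t / 2) atTop (𝓝 (π/2/2)) :=
    (Real.tendsto_arctan_atTop.mono_right nhdsWithin_le_nhds).div_const 2
  have h2 : Tendsto (fun t : ℝ => (t + 1) / (2 * (t ^ 2 + 1))) atTop (𝓝 0) := by
    apply tendsto_of_tendsto_of_tendsto_of_le_of_le' tendsto_const_nhds
      tendsto_inv_atTop_zero
    · filter_upwards [eventually_ge_atTop (1:ℝ)] with t ht
      positivity
    · filter_upwards [eventually_ge_atTop (1:ℝ)] with t ht
      rw [div_le_iff₀ (by positivity), inv_eq_one_div, div_mul_eq_mul_div,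
        le_div_iff₀ (by linarith)]
      nlinarith
  have := h1.sub h2
  norm_num at this
  convert this using 2
  · rfl
  · ring

lemma tendsto_G_atTop : Tendsto (fun y => phi (Real.exp y)) atTop (𝓝 (π/4)) := by
  have := tendsto_phi_atTop.comp Real.tendsto_exp_atTop
  exact this

lemma Ff_nonneg (y : ℝ) : 0 ≤ Ff y := by
  unfold Ff
  have := Real.exp_pos y
  have := Real.exp_pos (-y)
  positivity

lemma Ff_cont : Continuous Ff := by
  unfold Ff
  apply Continuous.div (by fun_prop) (by fun_prop)
  intro y
  have := Real.exp_pos y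
  have := Real.exp_pos (-y)
  positivity

lemma phi_cont : Continuous phi := by
  unfold phi
  apply Continuous.sub
  · exact Real.continuous_arctan.div_const 2
  · apply Continuous.div (by fun_prop) (by fun_prop)
    intro t; positivity

lemma G_cont : Continuous (fun y => phi (Real.exp y)) :=
  phi_cont.comp Real.continuous_exp

lemma Ff_int_Iic : IntegrableOn Ff (Iic 0) := by
  apply Integrable.mono' (g := fun y => 2 * Real.exp y)
    ((integrableOn_exp_Iic 0).const_mul 2)
    (Ff_cont.aestronglyMeasurable.restrict)
  filter_upwards [ae_restrict_mem measurableSet_Iic] with y hy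
  rw [Real.norm_of_nonneg (Ff_nonneg y)]
  unfold Ff
  have ha : 0 < Real.exp y := Real.exp_pos y
  have ha1 : Real.exp y ≤ 1 := Real.exp_le_one_iff.2 hy
  have hb1 : 1 ≤ Real.exp (-y) := Real.one_le_exp (by simpa using hy)
  have hab : Real.exp y * Real.exp (-y) = 1 := by
    rw [← Real.exp_add]; simp
  rw [div_le_iff₀ (by positivity)]
  nlinarith [sq_nonneg (Real.exp y + Real.exp (-y)), ha.le, hb1, hab]

lemma Ff_int_Ioi : IntegrableOn Ff (Ioi 0) :=
  integrableOn_Ioi_deriv_of_nonneg (G_cont.continuousWithinAt)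
    (fun x _ => hasDerivAt_G x) (fun x _ => Ff_nonneg x) tendsto_G_atTop

lemma Ff_int : Integrable Ff := by
  rw [← integrableOn_univ, ← Set.Iic_union_Ioi (a := (0:ℝ))]
  exact Ff_int_Iic.union Ff_int_Ioi

lemma Ff_integral : ∫ y : ℝ, Ff y = π/4 + 1/2 := by
  have hIic : ∫ y in Iic (0:ℝ), Ff y = phi (Real.exp 0) - (-(1/2)) :=
    integral_Iic_of_hasDerivAt_of_tendsto (G_cont.continuousWithinAt)
      (fun x _ => hasDerivAt_G x) Ff_int_Iic tendsto_G_atBot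
  have hIoi : ∫ y in Ioi (0:ℝ), Ff y = π/4 - phi (Real.exp 0) :=
    integral_Ioi_of_hasDerivAt_of_nonneg (G_cont.continuousWithinAt)
      (fun x _ => hasDerivAt_G x) (fun x _ => Ff_nonneg x) tendsto_G_atTop
  rw [← intervalIntegral.integral_Iic_add_Ioi (b := (0:ℝ)) Ff_int_Iic Ff_int_Ioi, hIic, hIoi]
  ring

lemma pointwise_bound {σ x : ℝ} (hσ1 : 1/2 < σ) (hσ2 : σ < 1) (hx : 0 ≤ x) (y : ℝ) :
    Rf (Real.exp y) * Rf (Real.exp (x - y)) * Real.exp (x + (2 * σ - 1) * y)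
      ≤ calC ^ 2 * Ff y := by
  obtain ⟨a, hadef⟩ : ∃ a, Real.exp y = a := ⟨_, rfl⟩
  obtain ⟨b, hbdef⟩ : ∃ b, Real.exp (-y) = b := ⟨_, rfl⟩
  obtain ⟨v, hvdef⟩ : ∃ v, Real.exp (x - y) = v := ⟨_, rfl⟩
  obtain ⟨X, hXdef⟩ : ∃ X, Real.exp x = X := ⟨_, rfl⟩
  obtain ⟨w, hwdef⟩ : ∃ w, Real.exp ((2 * σ - 1) * y) = w := ⟨_, rfl⟩
  have ha : 0 < a := hadef ▸ Real.exp_pos y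
  have hb : 0 < b := hbdef ▸ Real.exp_pos _
  have hv : 0 < v := hvdef ▸ Real.exp_pos _
  have hX1 : 1 ≤ X := hXdef ▸ Real.one_le_exp hx
  have hab : a * b = 1 := by rw [← hadef, ← hbdef, ← Real.exp_add]; simp
  have hav : a * v = X := by rw [← hadef, ← hvdef, ← hXdef, ← Real.exp_add]; ring_nf
  have hvXb : v = X * b := by rw [← hvdef, ← hXdef, ← hbdef, ← Real.exp_add]; ring_nf
  have hw0 : 0 < w := hwdef ▸ Real.exp_pos _
  have hw : w ≤ a + 1 := by
    rcases le_or_gt 0 y with hy | hy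
    · have h0 : (2 * σ - 1) * y ≤ y := by nlinarith
      have := Real.exp_le_exp.2 h0
      rw [hwdef, hadef] at this
      linarith
    · have h0 : (2 * σ - 1) * y ≤ 0 := by nlinarith
      have := Real.exp_le_exp.2 h0
      rw [hwdef, Real.exp_zero] at this
      linarith
  have hE : Real.exp (x + (2 * σ - 1) * y) = X * w := by
    rw [← hXdef, ← hwdef, ← Real.exp_add]
  have hFf : Ff y = (a + 1) / (a + b) ^ 2 := by
    unfold Ff; rw [hadef, hbdef]
  rw [hadef, hvdef, hE, hFf]
  -- step 1
  have h1 : Rf a ≤ calC / (a ^ 3 + a) := Rf_le_calC_div ha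
  have h2 : Rf v ≤ calC / (v ^ 3 + v) := Rf_le_calC_div hv
  have hpa : 0 < a ^ 3 + a := by positivity
  have hpv : 0 < v ^ 3 + v := by positivity
  have hprod : Rf a * Rf v * (X * w)
      ≤ (calC / (a ^ 3 + a)) * (calC / (v ^ 3 + v)) * (X * w) := by
    have hXw : 0 < X * w := by positivity
    apply mul_le_mul_of_nonneg_right _ hXw.le
    exact mul_le_mul h1 h2 (Rf_nonneg v) (div_nonneg calC_pos.le hpa.le)
  refine hprod.trans ?_
  -- step 2
  have hsum : 0 < a + b := by linarith
  have key : X * w * (a + b) ^ 2 ≤ (a + 1) * ((a ^ 3 + a) * (v ^ 3 + v)) := by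
    have h5 : (a ^ 2 + 1) * (b ^ 2 + 1) = (a + b) ^ 2 := by nlinarith [hab]
    have hX2 : 1 ≤ X ^ 2 := by nlinarith
    have h6 : b ^ 2 + 1 ≤ v ^ 2 + 1 := by
      rw [hvXb]
      nlinarith [mul_le_mul_of_nonneg_left hX2 (sq_nonneg b)]
    have h7 : (a + b) ^ 2 ≤ (a ^ 2 + 1) * (v ^ 2 + 1) := by
      rw [← h5]
      exact mul_le_mul_of_nonneg_left h6 (by positivity)
    have h8 : w * (a + b) ^ 2 ≤ (a + 1) * ((a ^ 2 + 1) * (v ^ 2 + 1)) :=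
      mul_le_mul hw h7 (sq_nonneg _) (by positivity)
    have h9 : (a ^ 3 + a) * (v ^ 3 + v) = X * ((a ^ 2 + 1) * (v ^ 2 + 1)) := by
      rw [← hav]; ring
    rw [h9]
    have hX0 : (0:ℝ) ≤ X := by linarith
    calc X * w * (a + b) ^ 2 = X * (w * (a + b) ^ 2) := by ring
      _ ≤ X * ((a + 1) * ((a ^ 2 + 1) * (v ^ 2 + 1))) := mul_le_mul_of_nonneg_left h8 hX0
      _ = (a + 1) * (X * ((a ^ 2 + 1) * (v ^ 2 + 1))) := by ring
  rw [div_mul_div_comm, div_mul_eq_mul_div, ← mul_div_assoc,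
    div_le_div_iff₀ (by positivity) (by positivity)]
  calc calC * calC * (X * w) * (a + b) ^ 2
      = calC ^ 2 * (X * w * (a + b) ^ 2) := by ring
    _ ≤ calC ^ 2 * ((a + 1) * ((a ^ 3 + a) * (v ^ 3 + v))) :=
        mul_le_mul_of_nonneg_left key (by positivity)
    _ = calC ^ 2 * (a + 1) * ((a ^ 3 + a) * (v ^ 3 + v)) := by ring

theorem W_bound (σ : ℝ) (hσ : σ ∈ Ioo (1 / 2 : ℝ) 1) (x : ℝ) (hx : 0 ≤ x) :
    Wf σ x < 2 * calC ^ 2 := by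
  obtain ⟨hσ1, hσ2⟩ := hσ
  have hmono : Wf σ x ≤ ∫ y : ℝ, calC ^ 2 * Ff y := by
    unfold Wf
    apply integral_mono_of_nonneg
    · apply ae_of_all
      intro y
      have := Rf_nonneg (Real.exp y)
      have := Rf_nonneg (Real.exp (x - y))
      have := (Real.exp_pos (x + (2 * σ - 1) * y)).le
      positivity
    · exact Ff_int.const_mul _
    · exact ae_of_all _ (pointwise_bound hσ1 hσ2 hx)
  have hval : ∫ y : ℝ, calC ^ 2 * Ff y = calC ^ 2 * (π/4 + 1/2) := by
    rw [MeasureTheory.integral_const_mul, Ff_integral]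
  have hpi : π/4 + 1/2 < 2 := by
    have := Real.pi_lt_d2
    linarith
  have hC2 : 0 < calC ^ 2 := pow_pos calC_pos 2
  calc Wf σ x ≤ calC ^ 2 * (π/4 + 1/2) := by rw [← hval]; exact hmono
    _ < calC ^ 2 * 2 := by exact mul_lt_mul_of_pos_left hpi hC2
    _ = 2 * calC ^ 2 := by ring
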